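/- arXiv:1012.3238 — 2 statements merged into one kernel-verified Lean document; each statement's English description precedes it below -/
import Mathlib

section
/- Let n ≥ 1, and let (J,K,L) and (J',K',L') be two partitions of [n+2] into three parts with J, K, J', K' all nonempty. Then the cell U_{J'K'L'} is contained in the cell U_{JKL} if and only if J ⊆ J' and K ⊆ K'. Moreover, when J ⊆ J' and K ⊆ K' hold and (J,K,L) ≠ (J',K',L'), one automatically has L' ⊊ L. -/
open Finset

/-- The saturation (under translations by multiples of the all-ones vector) of
the cell `U_{JKL}` of the boundary of the zonotope `Z_n`, as a subset of
`ℝ^{n+2}`; its image in the quotient `ℝ^{n+2}/ℝ·(1,…,1)` is the cell itself. -/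
def cellU (n : ℕ) (J K L : Finset (Fin (n + 2))) : Set (Fin (n + 2) → ℝ) :=
  {x | ∃ y : Fin (n + 2) → ℝ, ∃ c : ℝ,
      (∀ j ∈ J, y j = 0) ∧ (∀ k ∈ K, y k = 1) ∧
      (∀ l ∈ L, y l ∈ Set.Icc (0 : ℝ) 1) ∧ (∀ i, x i = y i + c)}

/-- `U_{J'K'L'} ⊆ U_{JKL}` iff `J ⊆ J'` and `K ⊆ K'`; moreover in that case, if
the partitions differ, then `L' ⊊ L`. -/
theorem stmt_2 (n : ℕ) (hn : 1 ≤ n)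
    (J K L J' K' L' : Finset (Fin (n + 2)))
    (hJK : Disjoint J K) (hJL : Disjoint J L) (hKL : Disjoint K L)
    (hcover : J ∪ K ∪ L = Finset.univ)
    (hJK' : Disjoint J' K') (hJL' : Disjoint J' L') (hKL' : Disjoint K' L')
    (hcover' : J' ∪ K' ∪ L' = Finset.univ)
    (hJ : J.Nonempty) (hK : K.Nonempty) (hJ' : J'.Nonempty) (hK' : K'.Nonempty) :
    (cellU n J' K' L' ⊆ cellU n J K L ↔ J ⊆ J' ∧ K ⊆ K') ∧
    (J ⊆ J' → K ⊆ K' → (J, K, L) ≠ (J', K', L') → L' ⊂ L) := by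
  obtain ⟨j₀, hj₀⟩ := hJ
  obtain ⟨k₀, hk₀⟩ := hK
  constructor
  · constructor
    · intro hsub
      constructor
      · -- J ⊆ J', using test point: 0 on J', 1 elsewhere
        intro j hj
        set x : Fin (n + 2) → ℝ := fun i => if i ∈ J' then 0 else 1 with hxdef
        have hx : x ∈ cellU n J' K' L' := by
          refine ⟨x, 0, ?_, ?_, ?_, fun i => by ring⟩
          · intro a ha; simp [hxdef, ha]
          · intro a ha
            have : a ∉ J' := fun h => (disjoint_left.1 hJK' h ha)
            simp [hxdef, this]
          · intro a ha
            have : a ∉ J' := fun h => (disjoint_left.1 hJL' h ha)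
            simp [hxdef, this]
        obtain ⟨y, c, hyJ, hyK, hyL, hxy⟩ := hsub hx
        have hc0 : x j₀ = c := by rw [hxy j₀, hyJ j₀ hj₀, zero_add]
        have hc1 : x k₀ = 1 + c := by rw [hxy k₀, hyK k₀ hk₀]
        have hc : c = 0 := by
          by_contra hcne
          have h1 : x j₀ = 0 ∨ x j₀ = 1 := by
            by_cases h : j₀ ∈ J' <;> simp [hxdef, h]
          have h2 : x k₀ = 0 ∨ x k₀ = 1 := by
            by_cases h : k₀ ∈ J' <;> simp [hxdef, h]
          rcases h1 with h1 | h1 <;> rcases h2 with h2 | h2 <;>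
            rw [hc0] at h1 <;> rw [hc1] at h2 <;> first | exact hcne h1 | linarith
        have hxj : x j = 0 := by rw [hxy j, hyJ j hj, hc, zero_add]
        by_contra hjJ'
        simp [hxdef, hjJ'] at hxj
      · -- K ⊆ K', using test point: 1 on K', 0 elsewhere
        intro k hk
        set x : Fin (n + 2) → ℝ := fun i => if i ∈ K' then 1 else 0 with hxdef
        have hx : x ∈ cellU n J' K' L' := by
          refine ⟨x, 0, ?_, ?_, ?_, fun i => by ring⟩
          · intro a ha
            have : a ∉ K' := fun h => (disjoint_left.1 hJK' ha h)
            simp [hxdef, this]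
          · intro a ha; simp [hxdef, ha]
          · intro a ha
            have : a ∉ K' := fun h => (disjoint_left.1 hKL' h ha)
            simp [hxdef, this]
        obtain ⟨y, c, hyJ, hyK, hyL, hxy⟩ := hsub hx
        have hc0 : x j₀ = c := by rw [hxy j₀, hyJ j₀ hj₀, zero_add]
        have hc1 : x k₀ = 1 + c := by rw [hxy k₀, hyK k₀ hk₀]
        have hc : c = 0 := by
          by_contra hcne
          have h1 : x j₀ = 0 ∨ x j₀ = 1 := by
            by_cases h : j₀ ∈ K' <;> simp [hxdef, h]
          have h2 : x k₀ = 0 ∨ x k₀ = 1 := by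
            by_cases h : k₀ ∈ K' <;> simp [hxdef, h]
          rcases h1 with h1 | h1 <;> rcases h2 with h2 | h2 <;>
            rw [hc0] at h1 <;> rw [hc1] at h2 <;> first | exact hcne h1 | linarith
        have hxk : x k = 1 := by rw [hxy k, hyK k hk, hc]; ring
        by_contra hkK'
        simp [hxdef, hkK'] at hxk
    · rintro ⟨hJJ, hKK⟩ x ⟨y, c, h1, h2, h3, h4⟩
      refine ⟨y, c, fun j hj => h1 j (hJJ hj), fun k hk => h2 k (hKK hk), ?_, h4⟩
      intro l hl
      have : l ∈ J' ∪ K' ∪ L' := by rw [hcover']; exact mem_univ l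
      rcases mem_union.1 this with h | h
      · rcases mem_union.1 h with h | h
        · rw [h1 l h]; exact ⟨le_refl 0, zero_le_one⟩
        · rw [h2 l h]; exact ⟨zero_le_one, le_refl 1⟩
      · exact h3 l h
  · intro hJJ hKK hne
    have hL'L : L' ⊆ L := by
      intro l hl
      have hlJ : l ∉ J := fun h => (disjoint_left.1 hJL' (hJJ h) hl)
      have hlK : l ∉ K := fun h => (disjoint_left.1 hKL' (hKK h) hl)
      have : l ∈ J ∪ K ∪ L := by rw [hcover]; exact mem_univ l
      rcases mem_union.1 this with h | h
      · rcases mem_union.1 h with h | h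
        · exact absurd h hlJ
        · exact absurd h hlK
      · exact h
    refine ⟨hL'L, fun hLL' => ?_⟩
    -- then L = L', derive J = J', K = K', contradiction
    have hLeq : L = L' := le_antisymm hLL' hL'L
    have hJ'J : J' ⊆ J := by
      intro j hj
      have : j ∈ J ∪ K ∪ L := by rw [hcover]; exact mem_univ j
      rcases mem_union.1 this with h | h
      · rcases mem_union.1 h with h | h
        · exact h
        · exact absurd hj (fun hj' => (disjoint_left.1 hJK' hj' (hKK h)))
      · rw [hLeq] at h
        exact absurd hj (fun hj' => (disjoint_left.1 hJL' hj' h))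
    have hK'K : K' ⊆ K := by
      intro k hk
      have : k ∈ J ∪ K ∪ L := by rw [hcover]; exact mem_univ k
      rcases mem_union.1 this with h | h
      · rcases mem_union.1 h with h | h
        · exact absurd hk (fun hk' => (disjoint_left.1 hJK' (hJJ h) hk'))
        · exact h
      · rw [hLeq] at h
        exact absurd hk (fun hk' => (disjoint_left.1 hKL' hk' h))
    exact hne (by rw [le_antisymm hJJ hJ'J, le_antisymm hKK hK'K, hLeq])
end

section
/- Let n ≥ 1 and 0 < δ < 1/√(n+2). Suppose φ : ℝ → ℝ satisfies 0 < φ(x) ≤ 1 for all x, φ(x) = 1 for |x| ≤ δ, and φ(x) < 1 for |x| > δ. Let x ∈ ℝ^{n+2} with Σ_k x_k² = 1, and set μ = (Σ_k φ(x_k))/(n+2) and f_i = φ(x_i) − μ. If j, k are indices with x_j > δ and 0 ≤ x_k ≤ δ, then f_k·x_j − f_j·x_k > 0. -/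
open Finset Real

/-- Monotonicity of the gradient flow: if `x_j > δ` and `0 ≤ x_k ≤ δ`, then
`f_k·x_j − f_j·x_k > 0`, where `f_i = φ(x_i) − (Σ φ(x_l))/(n+2)`. -/
theorem stmt_4 (n : ℕ) (hn : 1 ≤ n) (δ : ℝ)
    (hδ0 : 0 < δ) (hδ1 : δ < 1 / Real.sqrt (n + 2))
    (φ : ℝ → ℝ)
    (hφpos : ∀ x, 0 < φ x) (hφle : ∀ x, φ x ≤ 1)
    (hφeq : ∀ x, |x| ≤ δ → φ x = 1)
    (hφlt : ∀ x, δ < |x| → φ x < 1)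
    (x : Fin (n + 2) → ℝ) (hx : ∑ l, (x l) ^ 2 = 1)
    (μ : ℝ) (hμ : μ = (∑ l, φ (x l)) / (n + 2))
    (f : Fin (n + 2) → ℝ) (hf : ∀ i, f i = φ (x i) - μ)
    (j k : Fin (n + 2)) (hj : δ < x j) (hk0 : 0 ≤ x k) (hkδ : x k ≤ δ) :
    0 < f k * x j - f j * x k := by
  have h1 : φ (x j) < 1 := hφlt _ (by rw [abs_of_pos (hδ0.trans hj)]; exact hj)
  have hμ1 : μ < 1 := by
    rw [hμ]
    have hsum : (∑ l, φ (x l)) < ∑ _l : Fin (n + 2), (1 : ℝ) :=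
      Finset.sum_lt_sum (fun i _ => hφle _) ⟨j, Finset.mem_univ j, h1⟩
    rw [div_lt_one (by positivity)]
    simpa using hsum
  have hfk : f k = 1 - μ := by
    rw [hf, hφeq _ (abs_le.mpr ⟨by linarith, hkδ⟩)]
  have hfj : f j < 1 - μ := by rw [hf]; linarith
  nlinarith [mul_pos (sub_pos.mpr hμ1) (hδ0.trans hj),
    mul_nonneg (sub_pos.mpr hμ1).le hk0, mul_le_mul_of_nonneg_right hfj.le hk0]
end
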